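/- The number of nondecreasing m/n-parking functions equals the rational Catalan number (1/(m+n)) * binomial(m+n, n), for m, n coprime. -/

import Mathlib

open Finset
open Fin.NatCast

/-- Generic equivalence: count form vs sorted form, for monotone sequences. -/
lemma count_iff (M n : ℕ) (hM : 0 < M) (hn : 0 < n) (f : Fin n → ℕ) (mono : Monotone f) :
    (∀ ℓ : ℕ, 0 < ℓ → ℓ ≤ M → ℓ * n ≤ M * (Finset.univ.filter fun k => f k < ℓ).card)
      ↔ ∀ i : Fin n, n * f i ≤ M * i.val := by
  constructor
  · intro h i
    -- all values < M
    have hall : ∀ k, f k < M := by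
      intro k
      have := h M hM le_rfl
      have hcard : n ≤ (Finset.univ.filter fun k => f k < M).card :=
        le_of_mul_le_mul_left (by simpa [Nat.mul_comm] using this) hM
      have : (Finset.univ.filter fun k => f k < M) = Finset.univ := by
        apply Finset.eq_univ_of_card
        exact le_antisymm (Finset.card_le_univ _) (by simpa using hcard)
      have hk : k ∈ Finset.univ.filter fun k => f k < M := by
        rw [this]; exact Finset.mem_univ k
      simpa using hk
    rcases Nat.eq_zero_or_pos (f i) with h0 | hpos
    · simp [h0]
    · have hle := h (f i) hpos (hall i).le
      have hsub : (Finset.univ.filter fun k => f k < f i) ⊆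
          (Finset.univ.filter fun k : Fin n => k < i) := by
        intro k hk
        simp only [Finset.mem_filter, Finset.mem_univ, true_and] at hk ⊢
        by_contra hki
        exact absurd (mono (le_of_not_gt hki)) (not_le.2 hk)
      have hcard : (Finset.univ.filter fun k => f k < f i).card ≤ i.val := by
        calc (Finset.univ.filter fun k => f k < f i).card
            ≤ (Finset.univ.filter fun k : Fin n => k < i).card := Finset.card_le_card hsub
          _ = i.val := by
              have : (Finset.univ.filter fun k : Fin n => k < i) = Finset.Iio i := by
                ext k; simp
              rw [this, Fin.card_Iio]
      calc n * f i = f i * n := Nat.mul_comm _ _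
        _ ≤ M * (Finset.univ.filter fun k => f k < f i).card := hle
        _ ≤ M * i.val := Nat.mul_le_mul_left _ hcard
  · intro h ℓ hℓ hℓM
    by_cases hall : ∀ k, f k < ℓ
    · have : (Finset.univ.filter fun k => f k < ℓ) = Finset.univ :=
        Finset.filter_true_of_mem (fun k _ => hall k)
      rw [this]
      simpa [Finset.card_univ, Nat.mul_comm] using Nat.mul_le_mul_right n hℓM
    · push_neg at hall
      obtain ⟨k₀, hk₀⟩ := hall
      have hne : (Finset.univ.filter fun k : Fin n => ℓ ≤ f k).Nonempty :=
        ⟨k₀, by simpa using hk₀⟩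
      set i := (Finset.univ.filter fun k : Fin n => ℓ ≤ f k).min' hne with hi
      have hif : ℓ ≤ f i := by
        have := (Finset.univ.filter fun k : Fin n => ℓ ≤ f k).min'_mem hne
        simpa using this
      have hsub : (Finset.univ.filter fun k : Fin n => k < i) ⊆
          (Finset.univ.filter fun k => f k < ℓ) := by
        intro k hk
        simp only [Finset.mem_filter, Finset.mem_univ, true_and] at hk ⊢
        by_contra hkb
        have : i ≤ k := Finset.min'_le _ _ (by simpa using le_of_not_gt hkb)
        exact absurd hk (not_lt.2 this)
      have hcard : i.val ≤ (Finset.univ.filter fun k => f k < ℓ).card := by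
        calc i.val = (Finset.univ.filter fun k : Fin n => k < i).card := by
              have : (Finset.univ.filter fun k : Fin n => k < i) = Finset.Iio i := by
                ext k; simp
              rw [this, Fin.card_Iio]
          _ ≤ _ := Finset.card_le_card hsub
      calc ℓ * n = n * ℓ := Nat.mul_comm _ _
        _ ≤ n * f i := Nat.mul_le_mul_left _ hif
        _ ≤ M * i.val := h i
        _ ≤ M * _ := Nat.mul_le_mul_left _ hcard


def good (N n : ℕ) (A : Finset (Fin N)) : Prop :=
  ∀ ℓ : ℕ, 0 < ℓ → ℓ ≤ N → ℓ * n ≤ N * (A.filter fun a => a.val < ℓ).card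

def rot {N : ℕ} (t : Fin N) (A : Finset (Fin N)) : Finset (Fin N) :=
  A.image (· + t)

section Cycle

variable {N n : ℕ} [NeZero N] (A : Finset (Fin N))

/-- indicator of the periodized set -/
def chi (A : Finset (Fin N)) (j : ℕ) : ℕ := if (j : Fin N) ∈ A then 1 else 0

def cnt (A : Finset (Fin N)) (x : ℕ) : ℕ := ∑ j ∈ Finset.range x, chi A j

def ht (n : ℕ) (A : Finset (Fin N)) (x : ℕ) : ℤ := N * cnt A x - n * x

lemma chi_period (j : ℕ) : chi A (j + N) = chi A j := by
  have : ((j + N : ℕ) : Fin N) = (j : Fin N) := by push_cast; simp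
  simp [chi, this]

lemma filter_card_eq (ℓ : ℕ) (hℓ : ℓ ≤ N) :
    (A.filter fun a => a.val < ℓ).card = cnt A ℓ := by
  have : cnt A ℓ = ((Finset.range ℓ).filter fun j : ℕ => ((j : ℕ) : Fin N) ∈ A).card := by
    rw [Finset.card_filter, cnt]
    simp [chi]
  rw [this]
  apply Finset.card_bij (fun (a : Fin N) _ => a.val)
  · intro a ha
    simp only [Finset.mem_filter, Finset.mem_range] at ha ⊢
    refine ⟨ha.2, ?_⟩
    have : ((a.val : ℕ) : Fin N) = a := by
      ext; simp [Fin.val_natCast, Nat.mod_eq_of_lt a.isLt]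
    rw [this]; exact ha.1
  · intro a ha b hb h
    exact Fin.ext h
  · intro j hj
    simp only [Finset.mem_filter, Finset.mem_range] at hj
    have hjN : j < N := lt_of_lt_of_le hj.1 hℓ
    refine ⟨(j : Fin N), ?_, ?_⟩
    · simp only [Finset.mem_filter]
      exact ⟨hj.2, by simp [Fin.val_natCast, Nat.mod_eq_of_lt hjN, hj.1]⟩
    · simp [Fin.val_natCast, Nat.mod_eq_of_lt hjN]

lemma window_sum (hA : A.card = n) (s : ℕ) :
    ∑ j ∈ Finset.range N, chi A (s + j) = n := by
  induction s with
  | zero =>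
    simp only [Nat.zero_add]
    rw [← cnt, ← filter_card_eq A N le_rfl, ← hA]
    congr 1
    apply Finset.filter_true_of_mem
    intro a _; exact a.isLt
  | succ s ih =>
    have h1 : ∑ j ∈ Finset.range (N + 1), chi A (s + j)
        = ∑ j ∈ Finset.range N, chi A (s + j) + chi A (s + N) := by
      rw [Finset.sum_range_succ]
    have h2 : ∑ j ∈ Finset.range (N + 1), chi A (s + j)
        = ∑ j ∈ Finset.range N, chi A (s + 1 + j) + chi A s := by
      rw [Finset.sum_range_succ']
      simp [Nat.add_comm, Nat.add_assoc, Nat.add_left_comm]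
    have h3 : chi A (s + N) = chi A s := chi_period A s
    omega

lemma cnt_add (s ℓ : ℕ) : cnt A (s + ℓ) = cnt A s + ∑ v ∈ Finset.range ℓ, chi A (s + v) := by
  induction ℓ with
  | zero => simp [cnt]
  | succ ℓ ih =>
    rw [← Nat.add_assoc, cnt, Finset.sum_range_succ, ← cnt, ih, Finset.sum_range_succ]
    omega

lemma ht_period (hA : A.card = n) (x : ℕ) : ht n A (x + N) = ht n A x := by
  unfold ht
  rw [cnt_add, window_sum A hA]
  push_cast
  ring

lemma ht_mod (hA : A.card = n) (x : ℕ) : ht n A x = ht n A (x % N) := by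
  conv_lhs => rw [← Nat.mod_add_div x N]
  generalize x / N = k
  induction k with
  | zero => simp
  | succ k ih =>
    rw [Nat.mul_succ, ← Nat.add_assoc, ht_period A hA, ih]

lemma ht_inj (hA : A.card = n) (hcop : Nat.Coprime n N) {x y : ℕ} (hx : x < N) (hy : y < N)
    (h : ht n A x = ht n A y) : x = y := by
  have hnat : n * x + N * cnt A y = n * y + N * cnt A x := by
    have := h
    unfold ht at this
    have h2 : (↑(n * x + N * cnt A y) : ℤ) = ↑(n * y + N * cnt A x) := by
      push_cast
      linarith
    exact_mod_cast h2
  have hmod : n * x ≡ n * y [MOD N] := by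
    have e1 : (n * x + N * cnt A y) % N = (n * x) % N := by
      rw [Nat.mul_comm N (cnt A y), Nat.add_mul_mod_self_right]
    have e2 : (n * y + N * cnt A x) % N = (n * y) % N := by
      rw [Nat.mul_comm N (cnt A x), Nat.add_mul_mod_self_right]
    unfold Nat.ModEq
    rw [← e1, ← e2, hnat]
  have : x ≡ y [MOD N] := by
    apply Nat.ModEq.cancel_left_of_coprime _ hmod
    rw [Nat.gcd_comm]
    exact hcop
  have := this
  unfold Nat.ModEq at this
  rwa [Nat.mod_eq_of_lt hx, Nat.mod_eq_of_lt hy] at this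

end Cycle


section T
variable {N : ℕ} [NeZero N] (A : Finset (Fin N))

lemma mod_cancel {t a : ℕ} (ht : t < N) (ha : a < N) : (N - t + (a + t) % N) % N = a := by
  rcases Nat.lt_or_ge (a + t) N with h | h
  · rw [Nat.mod_eq_of_lt h]
    have e : N - t + (a + t) = N + a := by omega
    rw [e, Nat.add_mod_left, Nat.mod_eq_of_lt ha]
  · have e1 : (a + t) % N = a + t - N := by
      have h2 : a + t - N < N := by omega
      conv_lhs => rw [show a + t = (a + t - N) + N by omega]
      rw [Nat.add_mod_right, Nat.mod_eq_of_lt h2]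
    rw [e1, show N - t + (a + t - N) = a by omega, Nat.mod_eq_of_lt ha]

lemma mod_cancel2 {u v : ℕ} (hu : u < N) (hv : v < N) : ((N - u + v) % N + u) % N = v := by
  rcases Nat.lt_or_ge v u with h | h
  · rw [Nat.mod_eq_of_lt (by omega : N - u + v < N),
      show N - u + v + u = N + v by omega, Nat.add_mod_left, Nat.mod_eq_of_lt hv]
  · have e1 : (N - u + v) % N = v - u := by
      conv_lhs => rw [show N - u + v = (v - u) + N by omega]
      rw [Nat.add_mod_right, Nat.mod_eq_of_lt (by omega)]
    rw [e1, show v - u + u = v by omega, Nat.mod_eq_of_lt hv]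

lemma count_rot (t : Fin N) (ℓ : ℕ) (hℓ : ℓ ≤ N) :
    ((rot t A).filter fun b => b.val < ℓ).card
      = ∑ v ∈ Finset.range ℓ, chi A (N - t.val + v) := by
  have hrhs : ∑ v ∈ Finset.range ℓ, chi A (N - t.val + v)
      = ((Finset.range ℓ).filter fun v : ℕ => (((N - t.val + v : ℕ)) : Fin N) ∈ A).card := by
    rw [Finset.card_filter]; simp [chi]
  rw [hrhs]
  apply Finset.card_bij (fun (b : Fin N) _ => b.val)
  · intro b hb
    simp only [Finset.mem_filter, Finset.mem_range] at hb ⊢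
    refine ⟨hb.2, ?_⟩
    obtain ⟨a, ha, rfl⟩ := Finset.mem_image.1 hb.1
    have hv : ((N - t.val + ((a + t).val) : ℕ) : Fin N) = a := by
      ext
      rw [Fin.val_natCast, Fin.add_def]
      exact mod_cancel t.isLt a.isLt
    rw [show ((a + t : Fin N)).val = (a + t).val from rfl, hv]
    exact ha
  · intro a _ b _ h; exact Fin.ext h
  · intro v hv
    simp only [Finset.mem_filter, Finset.mem_range] at hv
    have hvN : v < N := lt_of_lt_of_le hv.1 hℓ
    have hval : ((((N - t.val + v : ℕ) : Fin N)) + t).val = v := by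
      rw [Fin.add_def, Fin.val_natCast]
      exact mod_cancel2 t.isLt hvN
    refine ⟨((N - t.val + v : ℕ) : Fin N) + t, ?_, hval⟩
    simp only [Finset.mem_filter]
    constructor
    · exact Finset.mem_image.2 ⟨_, hv.2, rfl⟩
    · rw [hval]; exact hv.1


end T

section U
variable {N n : ℕ} [NeZero N] (A : Finset (Fin N))

lemma ht_add_mul (hA : A.card = n) (x k : ℕ) : ht n A (x + N * k) = ht n A x := by
  induction k with
  | zero => simp
  | succ k ih => rw [Nat.mul_succ, ← Nat.add_assoc, ht_period A hA, ih]

lemma good_rot_iff (hA : A.card = n) (t : Fin N) :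
    good N n (rot t A) ↔
      ∀ ℓ : ℕ, ℓ ≤ N → ht n A (N - t.val) ≤ ht n A (N - t.val + ℓ) := by
  set s := N - t.val with hs
  have key : ∀ ℓ : ℕ, ht n A (s + ℓ) - ht n A s
      = (N : ℤ) * (∑ v ∈ Finset.range ℓ, chi A (s + v) : ℕ) - n * ℓ := by
    intro ℓ; unfold ht; rw [cnt_add]; push_cast; ring
  constructor
  · intro hg ℓ hℓ
    rcases Nat.eq_zero_or_pos ℓ with rfl | hpos
    · simp
    · have h1 := hg ℓ hpos hℓ
      rw [count_rot A t ℓ hℓ] at h1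
      have h2 : (ℓ * n : ℤ) ≤ (N : ℤ) * (∑ v ∈ Finset.range ℓ, chi A (s + v) : ℕ) := by
        exact_mod_cast h1
      have h3 := key ℓ
      linarith
  · intro hg ℓ hpos hℓ
    have h1 := hg ℓ hℓ
    have h3 := key ℓ
    rw [count_rot A t ℓ hℓ]
    have h2 : (ℓ * n : ℤ) ≤ (N : ℤ) * (∑ v ∈ Finset.range ℓ, chi A (N - t.val + v) : ℕ) := by
      linarith
    exact_mod_cast h2

lemma exists_unique_good_rot (hcop : Nat.Coprime n N) (hA : A.card = n) :
    ∃! t : Fin N, good N n (rot t A) := by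
  have hN : 0 < N := Nat.pos_of_ne_zero (NeZero.ne N)
  obtain ⟨x₀, hx₀mem, hx₀min⟩ := Finset.exists_min_image (Finset.range N) (ht n A)
    ⟨0, Finset.mem_range.2 hN⟩
  rw [Finset.mem_range] at hx₀mem
  have hmin : ∀ x : ℕ, ht n A x₀ ≤ ht n A x := by
    intro x
    rw [ht_mod A hA x]
    exact hx₀min _ (Finset.mem_range.2 (Nat.mod_lt _ hN))
  -- the candidate shift
  refine ⟨⟨(N - x₀) % N, Nat.mod_lt _ hN⟩, ?_, ?_⟩
  · show good N n (rot ⟨(N - x₀) % N, Nat.mod_lt _ hN⟩ A)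
    rw [good_rot_iff A hA]
    intro ℓ hℓ
    have hsx : (N - (N - x₀) % N) % N = x₀ := by
      rcases Nat.eq_zero_or_pos x₀ with rfl | hpos
      · simp [Nat.mod_self]
      · rw [Nat.mod_eq_of_lt (by omega : N - x₀ < N)]
        rw [show N - (N - x₀) = x₀ by omega, Nat.mod_eq_of_lt hx₀mem]
    have h1 : ht n A (N - (N - x₀) % N) = ht n A x₀ := by
      rw [ht_mod A hA, hsx]
    rw [h1]
    exact hmin _
  · intro t hg
    rw [good_rot_iff A hA] at hg
    set s := N - t.val with hs
    set x := s % N with hx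
    have hxN : x < N := Nat.mod_lt _ hN
    have hts : ht n A s = ht n A x := ht_mod A hA s
    have hshift : ∀ ℓ : ℕ, ht n A (s + ℓ) = ht n A (x + ℓ) := by
      intro ℓ
      conv_lhs => rw [show s = x + N * (s / N) by rw [hx]; exact (Nat.mod_add_div s N).symm]
      rw [show x + N * (s / N) + ℓ = (x + ℓ) + N * (s / N) by ring, ht_add_mul A hA]
    have hxmin : ∀ y : ℕ, y < N → ht n A x ≤ ht n A y := by
      intro y hy
      rcases le_or_gt x y with h | h
      · have h2 := hg (y - x) (by omega)
        rw [hshift, show x + (y - x) = y by omega] at h2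
        linarith
      · have h2 := hg (y + N - x) (by omega)
        rw [hshift, show x + (y + N - x) = y + N by omega, ht_period A hA] at h2
        linarith
    have hxx0 : x = x₀ :=
      ht_inj A hA hcop hxN hx₀mem (le_antisymm (hxmin x₀ hx₀mem) (hmin x))
    apply Fin.ext
    show t.val = (N - x₀) % N
    rcases Nat.eq_zero_or_pos t.val with h0 | hpos
    · have hx0 : x = 0 := by rw [hx, hs, h0, Nat.sub_zero, Nat.mod_self]
      rw [h0, ← hxx0, hx0, Nat.sub_zero, Nat.mod_self]
    · have hsN : s < N := by omega
      have hxs : x = s := Nat.mod_eq_of_lt hsN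
      have hx0 : x₀ = N - t.val := by rw [← hxx0, hxs, hs]
      rw [hx0, show N - (N - t.val) = t.val by omega, Nat.mod_eq_of_lt t.isLt]
end U
section V
variable {N n : ℕ} [NeZero N]

lemma card_rot (t : Fin N) (A : Finset (Fin N)) : (rot t A).card = A.card :=
  Finset.card_image_of_injective _ (add_left_injective t)

lemma rot_rot (t t' : Fin N) (A : Finset (Fin N)) : rot t' (rot t A) = rot (t + t') A := by
  unfold rot
  rw [Finset.image_image]
  congr 1
  funext a
  simp [add_assoc]

lemma rot_neg_rot (t : Fin N) (A : Finset (Fin N)) : rot (-t) (rot t A) = A := by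
  rw [rot_rot, add_neg_cancel]
  unfold rot
  simp

lemma rot_rot_neg (t : Fin N) (A : Finset (Fin N)) : rot t (rot (-t) A) = A := by
  rw [rot_rot, neg_add_cancel]
  unfold rot
  simp

theorem card_good_mul (hcop : Nat.Coprime n N) :
    Nat.card {A : Finset (Fin N) // A.card = n ∧ good N n A} * N = N.choose n := by
  classical
  have huniq : ∀ A : {A : Finset (Fin N) // A.card = n}, ∃! t : Fin N, good N n (rot t A.1) :=
    fun A => exists_unique_good_rot A.1 hcop A.2
  let t0 : {A : Finset (Fin N) // A.card = n} → Fin N := fun A => (huniq A).exists.choose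
  have ht0 : ∀ A, good N n (rot (t0 A) A.1) := fun A => (huniq A).exists.choose_spec
  let e : {A : Finset (Fin N) // A.card = n} ≃
      {A : Finset (Fin N) // A.card = n ∧ good N n A} × Fin N :=
    { toFun := fun A => (⟨rot (t0 A) A.1, by rw [card_rot]; exact A.2, ht0 A⟩, t0 A)
      invFun := fun P => ⟨rot (-P.2) P.1.1, by rw [card_rot]; exact P.1.2.1⟩
      left_inv := fun A => Subtype.ext (by simp only; rw [rot_neg_rot])
      right_inv := fun P => by
        obtain ⟨⟨B, hBcard, hBgood⟩, t⟩ := P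
        have hA : (rot t (rot (-t) B)) = B := rot_rot_neg t B
        set A : {A : Finset (Fin N) // A.card = n} :=
          ⟨rot (-t) B, by rw [card_rot]; exact hBcard⟩ with hAdef
        have hgt : good N n (rot t A.1) := by
          show good N n (rot t (rot (-t) B))
          rw [hA]; exact hBgood
        have h2 : t0 A = t := (huniq A).unique (ht0 A) hgt
        refine Prod.ext (Subtype.ext ?_) h2
        show rot (t0 A) A.1 = B
        rw [h2]
        exact hA }
  have h1 : Nat.card {A : Finset (Fin N) // A.card = n}
      = Nat.card {A : Finset (Fin N) // A.card = n ∧ good N n A} * N := by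
    rw [Nat.card_congr e, Nat.card_prod, Nat.card_eq_fintype_card, Nat.card_eq_fintype_card, Fintype.card_fin]
  rw [← h1, Nat.card_eq_fintype_card, Fintype.card_finset_len, Fintype.card_fin]
end V
section W
open Finset

lemma strictmono_add_le {n : ℕ} (g : Fin n → ℕ) (hg : StrictMono g) :
    ∀ d : ℕ, ∀ i j : Fin n, i.val + d = j.val → g i + d ≤ g j := by
  intro d
  induction d with
  | zero =>
    intro i j h
    have hij : i = j := Fin.ext (by omega)
    subst hij
    omega
  | succ d ih =>
    intro i j h
    have hj' : i.val + d < n := by omega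
    set j' : Fin n := ⟨i.val + d, hj'⟩ with hj'def
    have h1 := ih i j' rfl
    have h2 : g j' < g j := hg (by simp [Fin.lt_def, hj'def]; omega)
    omega

lemma strictmono_le_apply {n : ℕ} (hn : 0 < n) (g : Fin n → ℕ) (hg : StrictMono g)
    (i : Fin n) : i.val ≤ g i := by
  have := strictmono_add_le g hg i.val ⟨0, hn⟩ i (by simp)
  omega

variable {N n : ℕ}

lemma good_iff_sorted (hN : 0 < N) (hn : 0 < n) (A : Finset (Fin N)) (hA : A.card = n) :
    good N n A ↔ ∀ i : Fin n, n * (A.orderEmbOfFin hA i).val ≤ N * i.val := by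
  set e := A.orderEmbOfFin hA with he
  have hcnt : ∀ ℓ : ℕ, (A.filter fun a => a.val < ℓ).card
      = (Finset.univ.filter fun k : Fin n => (e k).val < ℓ).card := by
    intro ℓ
    symm
    apply Finset.card_bij (fun (k : Fin n) _ => e k)
    · intro k hk
      simp only [Finset.mem_filter, Finset.mem_univ, true_and] at hk ⊢
      exact ⟨Finset.orderEmbOfFin_mem A hA k, hk⟩
    · intro a _ b _ hab
      exact e.injective hab
    · intro a ha
      simp only [Finset.mem_filter] at ha
      have : a ∈ Set.range e := by
        rw [Finset.range_orderEmbOfFin]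
        exact ha.1
      obtain ⟨k, hk⟩ := this
      exact ⟨k, by simp [hk, ha.2]⟩
  have h1 : good N n A ↔ ∀ ℓ : ℕ, 0 < ℓ → ℓ ≤ N →
      ℓ * n ≤ N * (Finset.univ.filter fun k : Fin n => (e k).val < ℓ).card := by
    unfold good
    exact forall_congr' fun ℓ => by rw [hcnt]
  rw [h1]
  exact count_iff N n hN hn (fun k => (e k).val)
    (fun i j hij => by exact_mod_cast e.monotone hij)

lemma coprime_n_add (m : ℕ) (hcop : Nat.Coprime m n) : Nat.Coprime n (m + n) := by
  rw [Nat.coprime_add_self_right]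
  exact hcop.symm

theorem card_staircase_eq (m : ℕ) (hm : 0 < m) (hn : 0 < n) :
    Nat.card {f : Fin n → ℕ // Monotone f ∧ ∀ i : Fin n, n * f i ≤ m * i.val}
      = Nat.card {A : Finset (Fin (m + n)) // A.card = n ∧ good (m + n) n A} := by
  have hN : 0 < m + n := by omega
  apply Nat.card_congr
  -- forward data
  have hlt : ∀ (f : Fin n → ℕ), (∀ i : Fin n, n * f i ≤ m * i.val) →
      ∀ i : Fin n, f i + i.val < m + n := by
    intro f hf i
    have h1 : n * f i ≤ m * i.val := hf i
    have h2 : m * i.val ≤ m * (n - 1) := Nat.mul_le_mul_left _ (by omega)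
    have h4 : m * (n - 1) + m = m * n := by
      rw [← Nat.mul_succ]
      congr 1
      omega
    have h3 : n * f i < n * m := by
      rw [Nat.mul_comm n m]
      omega
    have : f i < m := Nat.lt_of_mul_lt_mul_left h3
    omega
  refine
    { toFun := fun F =>
        ⟨Finset.image (fun i : Fin n => (⟨F.1 i + i.val, hlt F.1 F.2.2 i⟩ : Fin (m + n)))
          Finset.univ, ?_, ?_⟩
      invFun := fun B =>
        ⟨fun i => ((B.1.orderEmbOfFin B.2.1) i).val - i.val, ?_, ?_⟩
      left_inv := ?_
      right_inv := ?_ }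
  case refine_1 =>
    obtain ⟨f, hfm, hfb⟩ := F
    rw [Finset.card_image_of_injective _ (fun i j hij => ?_), Finset.card_univ,
      Fintype.card_fin]
    have : f i + i.val = f j + j.val := by
      have := congrArg Fin.val hij; simpa using this
    by_contra hne
    rcases Fin.lt_or_lt_of_ne hne with h | h
    · have := hfm h.le; omega
    · have := hfm h.le; omega
  case refine_2 =>
    obtain ⟨f, hfm, hfb⟩ := F
    set g : Fin n → Fin (m + n) := fun i => ⟨f i + i.val, hlt f hfb i⟩ with hgdef
    have hgsm : StrictMono g := by
      intro i j hij
      have h1 : f i ≤ f j := hfm hij.le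
      have h2 : i.val < j.val := hij
      simp only [hgdef, Fin.lt_def]
      omega
    have hcard : (Finset.image g Finset.univ).card = n := by
      rw [Finset.card_image_of_injective _ hgsm.injective, Finset.card_univ, Fintype.card_fin]
    rw [good_iff_sorted hN hn _ hcard]
    have hemb : g = ⇑((Finset.image g Finset.univ).orderEmbOfFin hcard) :=
      Finset.orderEmbOfFin_unique hcard
        (fun x => Finset.mem_image_of_mem g (Finset.mem_univ x)) hgsm
    intro i
    rw [← hemb]
    show n * (f i + i.val) ≤ (m + n) * i.val
    have h1 := hfb i
    have e1 : n * (f i + i.val) = n * f i + n * i.val := Nat.mul_add n _ _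
    have e2 : (m + n) * i.val = m * i.val + n * i.val := Nat.add_mul m n _
    omega
  case refine_3 =>
    obtain ⟨A, hA, hAg⟩ := B
    set gv : Fin n → ℕ := fun i => ((A.orderEmbOfFin hA) i).val with hgv
    have hsm : StrictMono gv := by
      intro i j hij
      exact_mod_cast (A.orderEmbOfFin hA).strictMono hij
    intro i j hij
    have hij' : i.val ≤ j.val := hij
    have h1 := strictmono_add_le gv hsm (j.val - i.val) i j (by omega)
    have h2 := strictmono_le_apply hn gv hsm i
    show gv i - i.val ≤ gv j - j.val
    omega
  case refine_4 =>
    obtain ⟨A, hA, hAg⟩ := B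
    set gv : Fin n → ℕ := fun i => ((A.orderEmbOfFin hA) i).val with hgv
    have hsm : StrictMono gv := by
      intro i j hij
      exact_mod_cast (A.orderEmbOfFin hA).strictMono hij
    have hgb := (good_iff_sorted hN hn A hA).1 hAg
    intro i
    have h2 := strictmono_le_apply hn gv hsm i
    have h3 : n * gv i ≤ (m + n) * i.val := hgb i
    show n * (gv i - i.val) ≤ m * i.val
    have e1 : n * (gv i - i.val) + n * i.val = n * gv i := by
      rw [← Nat.mul_add]
      congr 1
      omega
    have e2 : (m + n) * i.val = m * i.val + n * i.val := Nat.add_mul m n _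
    omega
  case refine_5 =>
    intro F
    obtain ⟨f, hfm, hfb⟩ := F
    set g : Fin n → Fin (m + n) := fun i => ⟨f i + i.val, hlt f hfb i⟩ with hgdef
    have hgsm : StrictMono g := by
      intro i j hij
      have h1 : f i ≤ f j := hfm hij.le
      have h2 : i.val < j.val := hij
      simp only [hgdef, Fin.lt_def]
      omega
    have key : ∀ (h : (Finset.image g Finset.univ).card = n) (i : Fin n),
        ((Finset.image g Finset.univ).orderEmbOfFin h) i = g i := by
      intro h i
      rw [← Finset.orderEmbOfFin_unique h
        (fun x => Finset.mem_image_of_mem g (Finset.mem_univ x)) hgsm]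
    apply Subtype.ext
    funext i
    show (((Finset.image g Finset.univ).orderEmbOfFin _) i).val - i.val = f i
    rw [key]
    show (f i + i.val) - i.val = f i
    omega
  case refine_6 =>
    intro B
    obtain ⟨A, hA, hAg⟩ := B
    have hsm : StrictMono (fun i : Fin n => ((A.orderEmbOfFin hA) i).val) := by
      intro i j hij
      exact_mod_cast (A.orderEmbOfFin hA).strictMono hij
    have hle : ∀ i : Fin n, i.val ≤ ((A.orderEmbOfFin hA) i).val := fun i =>
      strictmono_le_apply hn _ hsm i
    apply Subtype.ext
    have main : ∀ (f0 : Fin n → ℕ) (h0 : ∀ i : Fin n, n * f0 i ≤ m * i.val),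
        (∀ i, f0 i = ((A.orderEmbOfFin hA) i).val - i.val) →
        Finset.image (fun i => (⟨f0 i + i.val, hlt f0 h0 i⟩ : Fin (m + n)))
          Finset.univ = A := by
      intro f0 h0 hf0
      have hpt : ∀ i : Fin n,
          (⟨f0 i + i.val, hlt f0 h0 i⟩ : Fin (m + n)) = (A.orderEmbOfFin hA) i := by
        intro i
        apply Fin.ext
        have h1 := hle i
        simp only [hf0 i]
        omega
      rw [Finset.image_congr (fun i _ => hpt i)]
      apply Finset.eq_of_subset_of_card_le
      · intro x hx
        obtain ⟨i, _, rfl⟩ := Finset.mem_image.1 hx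
        exact Finset.orderEmbOfFin_mem A hA i
      · rw [Finset.card_image_of_injective _ (A.orderEmbOfFin hA).injective,
          Finset.card_univ, Fintype.card_fin, hA]
    apply main
    case h0 =>
      intro i
      have hgb := (good_iff_sorted hN hn A hA).1 hAg
      have h2 := hle i
      have h3 : n * ((A.orderEmbOfFin hA) i).val ≤ (m + n) * i.val := hgb i
      show n * (((A.orderEmbOfFin hA) i).val - i.val) ≤ m * i.val
      have e1 : n * (((A.orderEmbOfFin hA) i).val - i.val) + n * i.val
          = n * ((A.orderEmbOfFin hA) i).val := by
        rw [← Nat.mul_add]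
        congr 1
        omega
      have e2 : (m + n) * i.val = m * i.val + n * i.val := Nat.add_mul m n _
      omega
    intro i
    rfl
end W

/-- An `m/n`-parking function. -/
def IsParkingFn (m n : ℕ) (f : Fin n → ℕ) : Prop :=
  ∀ ℓ : ℕ, 0 < ℓ → ℓ ≤ m → ℓ * n ≤ m * {k : Fin n | f k < ℓ}.ncard

lemma parking_iff {m n : ℕ} (hm : 0 < m) (hn : 0 < n) (f : Fin n → ℕ) (mono : Monotone f) :
    IsParkingFn m n f ↔ ∀ i : Fin n, n * f i ≤ m * i.val := by
  classical
  have hcnt : ∀ ℓ : ℕ,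
      {k : Fin n | f k < ℓ}.ncard = (Finset.univ.filter fun k => f k < ℓ).card := by
    intro ℓ
    rw [Set.ncard_eq_toFinset_card']
    congr 1
    ext k
    simp
  constructor
  · intro h
    exact (count_iff m n hm hn f mono).1 fun ℓ h1 h2 => by
      rw [← hcnt]
      exact h ℓ h1 h2
  · intro h ℓ h1 h2
    rw [hcnt]
    exact (count_iff m n hm hn f mono).2 h ℓ h1 h2

/-- The number of nondecreasing `m/n`-parking functions equals the rational
Catalan number `(1/(m+n))·C(m+n,n)`, for `m`, `n` coprime. -/
theorem stmt_1 (m n : ℕ) (hm : 0 < m) (hn : 0 < n) (hcop : Nat.Coprime m n) :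
    (m + n) * Nat.card {f : Fin n → ℕ // Monotone f ∧ IsParkingFn m n f} =
      Nat.choose (m + n) n := by
  haveI : NeZero (m + n) := ⟨by omega⟩
  have h1 : Nat.card {f : Fin n → ℕ // Monotone f ∧ IsParkingFn m n f}
      = Nat.card {f : Fin n → ℕ // Monotone f ∧ ∀ i : Fin n, n * f i ≤ m * i.val} := by
    apply Nat.card_congr
    apply Equiv.subtypeEquivRight
    intro f
    exact and_congr_right fun hmono => parking_iff hm hn f hmono
  rw [h1, card_staircase_eq m hm hn, Nat.mul_comm]
  exact card_good_mul (coprime_n_add m hcop)
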